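/- arXiv:1601.02914 — 2 statements merged into one kernel-verified Lean document; each statement's English description precedes it below -/
import Mathlib

section
/- For the complete graph K_n with n ≥ 2, the τ-index equals the average (Σ_{i=0}^{n−2} (i+1)(n−i) + 1)/(n(n−1)/2 + 1); that is, the minimum over all edge-deletion orderings is achieved by a Thue sequence in which the value n−ℓ occurs exactly ℓ+1 times for each ℓ = 0, 1, …, n−2, followed by a final value 1. -/
open SimpleGraph Function

/-- A Thue colouring of a simple graph `G`: a proper vertex colouring such that the
colour sequence along any path (here: the support of a path-walk) is non-repetitive,
i.e. it is never a square `l ++ l` with `l` nonempty. -/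
def IsThueColoring {V α : Type*} (G : SimpleGraph V) (φ : V → α) : Prop :=
  (∀ ⦃a b : V⦄, G.Adj a b → φ a ≠ φ b) ∧
  ∀ ⦃a b : V⦄ (p : G.Walk a b), p.IsPath →
    ∀ l : List α, l ≠ [] → p.support.map φ ≠ l ++ l

/-- The Thue chromatic number `π(G)`: the least number of colours admitting a Thue
colouring of `G`. -/
noncomputable def thueNumber {V : Type*} (G : SimpleGraph V) : ℕ :=
  sInf {k | ∃ φ : V → Fin k, IsThueColoring G φ}
/-- `l` is an ordering (a listing without repetition) of the edges of `G`. -/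
def IsEdgeOrdering {V : Type*} (G : SimpleGraph V) (l : List (Sym2 V)) : Prop :=
  l.Nodup ∧ ∀ e, e ∈ l ↔ e ∈ G.edgeSet

/-- The τ-value of an edge ordering: the average `(1/(ε+1)) Σ_{i=0}^{ε} π(G*ᵢ)` of the
Thue numbers of the graphs obtained by successively deleting the edges in order. -/
noncomputable def tauValue {V : Type*} (G : SimpleGraph V) (l : List (Sym2 V)) : ℝ :=
  (∑ i ∈ Finset.range (l.length + 1),
    (thueNumber (G.deleteEdges {e | e ∈ l.take i}) : ℝ)) / (l.length + 1)

/-- The τ-index of a graph: the minimum τ-value over all orderings of its edges. -/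
noncomputable def tauIndex {V : Type*} (G : SimpleGraph V) : ℝ :=
  sInf {x | ∃ l : List (Sym2 V), IsEdgeOrdering G l ∧ tauValue G l = x}

section S1
variable {V α : Type*}

lemma thue_not_square4 {G : SimpleGraph V} {φ : V → α} (h : IsThueColoring G φ)
    {x y z w : V} (hxy : G.Adj x y) (hyz : G.Adj y z) (hzw : G.Adj z w)
    (hxz : x ≠ z) (hyw : y ≠ w) (hcx : φ x = φ z) (hcy : φ y = φ w) : False := by
  have hxw : x ≠ w := by
    intro e; subst e; exact h.1 hzw (hcx.symm)
  have hzw' : z ≠ w := G.ne_of_adj hzw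
  have hxy' : x ≠ y := G.ne_of_adj hxy
  have hyz' : y ≠ z := G.ne_of_adj hyz
  set p : G.Walk x w := Walk.cons hxy (Walk.cons hyz (Walk.cons hzw Walk.nil)) with hp_def
  have hp : p.IsPath := by
    rw [hp_def]
    simp only [Walk.cons_isPath_iff, Walk.support_cons, Walk.support_nil,
      List.mem_cons, List.mem_singleton, List.not_mem_nil]
    push_neg
    simp_all
  have hsup : p.support.map φ = [φ x, φ y] ++ [φ x, φ y] := by
    simp [hp_def, Walk.support_cons, hcx.symm, hcy.symm]
  exact h.2 p hp [φ x, φ y] (by simp) hsup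

lemma isThue_of_almostInj {G : SimpleGraph V} {φ : V → α} (c0 : α)
    (hprop : ∀ ⦃a b : V⦄, G.Adj a b → φ a ≠ φ b)
    (hinj : ∀ x y : V, φ x = φ y → x = y ∨ φ x = c0) :
    IsThueColoring G φ := by
  refine ⟨hprop, ?_⟩
  intro a b p hp l hl hsq
  have hnd : p.support.Nodup := hp.support_nodup
  have hm : 0 < l.length := List.length_pos_iff.2 hl
  have hlen : p.support.length = l.length + l.length := by
    have := congrArg List.length hsq
    simpa using this
  have hlm : (p.support.map φ).length = l.length + l.length := by simpa using hlen
  have key : ∀ j, (hj : j < p.support.length) → φ (p.support[j]) = (l ++ l)[j]'(by simp; omega) := by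
    intro j hj
    have := List.getElem_of_eq hsq (i := j) (by simpa using hj)
    simpa using this
  -- every entry of l equals c0
  have hall : ∀ i, (hi : i < l.length) → l[i] = c0 := by
    intro i hi
    have h1 : i < p.support.length := by omega
    have h2 : l.length + i < p.support.length := by omega
    have e1 : φ (p.support[i]) = l[i] := by
      rw [key i h1]; exact List.getElem_append_left (by omega)
    have e2 : φ (p.support[l.length + i]) = l[i] := by
      rw [key _ h2, List.getElem_append_right (by omega)]
      congr 1; omega
    have hne : p.support[i] ≠ p.support[l.length + i] := by
      intro e
      have := (List.Nodup.getElem_inj_iff hnd (hi := h1) (hj := h2)).1 e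
      omega
    rcases hinj _ _ (e1.trans e2.symm) with h | h
    · exact absurd h hne
    · exact e1.symm.trans h
  -- first two support vertices are adjacent with equal colour c0
  have hadj : G.Adj (p.support[0]'(by omega)) (p.support[1]'(by omega)) := by
    have hc := p.isChain_adj_support
    rw [List.isChain_iff_getElem] at hc
    exact hc 0 (by omega)
  have c00 : φ (p.support[0]'(by omega)) = c0 := by
    rw [key 0 (by omega), List.getElem_append_left (by omega)]
    exact hall 0 hm
  have c01 : φ (p.support[1]'(by omega)) = c0 := by
    rw [key 1 (by omega)]
    rcases Nat.lt_or_ge 1 l.length with hh | hh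
    · rw [List.getElem_append_left (by omega)]; exact hall 1 hh
    · rw [List.getElem_append_right (by omega)]
      exact hall _ (by omega)
  exact hprop hadj (c00.trans c01.symm)

lemma thueNumber_le {G : SimpleGraph V} {k : ℕ} (φ : V → Fin k) (h : IsThueColoring G φ) :
    thueNumber G ≤ k := Nat.sInf_le ⟨φ, h⟩

lemma le_thueNumber {G : SimpleGraph V} {m : ℕ}
    (hne : ∃ k, ∃ φ : V → Fin k, IsThueColoring G φ)
    (h : ∀ k (φ : V → Fin k), IsThueColoring G φ → m ≤ k) : m ≤ thueNumber G := by
  obtain ⟨k0, hk0⟩ := hne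
  obtain ⟨φ, hφ⟩ := Nat.sInf_mem (⟨k0, hk0⟩ : Set.Nonempty {k | ∃ φ : V → Fin k, IsThueColoring G φ})
  exact h _ φ hφ

end S1


open Finset

lemma key_bound {n k : ℕ} {G : SimpleGraph (Fin n)} [DecidableRel G.Adj] {φ : Fin n → Fin k}
    (h : IsThueColoring G φ) :
    (n - k) * (n - k) + (n - k) ≤
      (Finset.univ.filter (fun p : Fin n × Fin n => p.1 ≠ p.2 ∧ ¬ G.Adj p.1 p.2)).card := by
  classical
  set N := Finset.univ.filter (fun p : Fin n × Fin n => p.1 ≠ p.2 ∧ ¬ G.Adj p.1 p.2) with hN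
  set A : Fin k → Finset (Fin n) := fun c => Finset.univ.filter (fun x => φ x = c) with hA
  have hmemA : ∀ c x, x ∈ A c ↔ φ x = c := by intro c x; simp [hA]
  set a : Fin k → ℕ := fun c => (A c).card with ha
  set b : Fin k → ℕ := fun c => a c - 1 with hb
  have hfib : N.card = ∑ q ∈ (Finset.univ : Finset (Fin k × Fin k)),
      (N.filter (fun p => (φ p.1, φ p.2) = q)).card :=
    Finset.card_eq_sum_card_fiberwise (fun x _ => Finset.mem_univ _)
  have harith : ∀ m : ℕ, (m - 1) * (m - 1) + (m - 1) ≤ m * m - m := by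
    intro m
    cases m with
    | zero => simp
    | succ a' =>
      have h1 : (a' + 1) * (a' + 1) = a' * a' + a' + (a' + 1) := by ring
      simp only [Nat.succ_sub_one]
      omega
  -- diagonal bound
  have hdiag : ∀ c : Fin k,
      b c * b c + b c ≤ (N.filter (fun p => (φ p.1, φ p.2) = (c, c))).card := by
    intro c
    have hsub : (A c).offDiag ⊆ N.filter (fun p => (φ p.1, φ p.2) = (c, c)) := by
      intro p hp
      rw [Finset.mem_offDiag] at hp
      obtain ⟨h1, h2, h3⟩ := hp
      rw [hmemA] at h1 h2
      simp only [hN, Finset.mem_filter, Finset.mem_univ, true_and]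
      exact ⟨⟨h3, fun hadj => h.1 hadj (h1.trans h2.symm)⟩, by rw [h1, h2]⟩
    calc b c * b c + b c ≤ a c * a c - a c := harith (a c)
      _ = (A c).offDiag.card := (Finset.offDiag_card _).symm
      _ ≤ _ := Finset.card_le_card hsub
  -- cross bound
  have hcross : ∀ c d : Fin k, c ≠ d →
      b c * b d ≤ (N.filter (fun p => (φ p.1, φ p.2) = (c, d))).card := by
    intro c d hcd
    rcases Nat.eq_zero_or_pos (a c) with hc0 | hc0
    · simp [hb, hc0]
    rcases Nat.eq_zero_or_pos (a d) with hd0 | hd0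
    · simp [hb, hd0]
    set E := (A c ×ˢ A d).filter (fun p => G.Adj p.1 p.2) with hE
    have hmemE : ∀ p, p ∈ E ↔ (φ p.1 = c ∧ φ p.2 = d ∧ G.Adj p.1 p.2) := by
      intro p
      simp [hE, Finset.mem_filter, Finset.mem_product, hmemA, and_assoc]
    have hdisjAB : Disjoint (A c) (A d) := by
      rw [Finset.disjoint_left]
      intro x hx hx'
      rw [hmemA] at hx hx'
      exact hcd (hx ▸ hx' ▸ rfl)
    have hEcard : E.card ≤ a c + a d - 1 := by
      by_cases hdeg : ∀ p ∈ E, (E.filter (fun q => q.1 = p.1)).card ≤ 1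
      · have hle : E.card ≤ a c := by
          apply Finset.card_le_card_of_injOn Prod.fst
          · intro p hp
            rw [Finset.mem_coe, hmemE] at hp
            rw [Finset.mem_coe, hmemA]; exact hp.1
          · intro p hp p' hp' hpp
            have hpE : p ∈ E := Finset.mem_coe.1 hp
            have hp'E : p' ∈ E := Finset.mem_coe.1 hp'
            have h1 : p ∈ E.filter (fun q => q.1 = p.1) := Finset.mem_filter.2 ⟨hpE, rfl⟩
            have h2 : p' ∈ E.filter (fun q => q.1 = p.1) :=
              Finset.mem_filter.2 ⟨hp'E, hpp.symm⟩
            exact (Finset.card_le_one.1 (hdeg p hpE) p' h2 p h1).symm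
        omega
      · push_neg at hdeg
        obtain ⟨p0, hp0E, hp0deg⟩ := hdeg
        have hp0deg' : 1 < (E.filter (fun q => q.1 = p0.1)).card := by omega
        set F : Fin n × Fin n → Fin n :=
          fun p => if (E.filter (fun q => q.1 = p.1)).card ≤ 1 then p.1 else p.2 with hF
        have himg : ∀ p ∈ E, F p ∈ ((A c ∪ A d).erase p0.1) := by
          intro p hp
          rw [hmemE] at hp
          rw [Finset.mem_erase]
          by_cases hd1 : (E.filter (fun q => q.1 = p.1)).card ≤ 1
          · rw [hF]; simp only [hd1, if_true]
            constructor
            · intro e; rw [e] at hd1; omega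
            · exact Finset.mem_union_left _ ((hmemA c p.1).2 hp.1)
          · rw [hF]; simp only [hd1, if_false]
            constructor
            · intro e
              have hc' : φ p0.1 = c := ((hmemE p0).1 hp0E).1
              have hpc : φ p.2 = c := by rw [e]; exact hc'
              exact hcd (hpc.symm.trans hp.2.1)
            · exact Finset.mem_union_right _ ((hmemA d p.2).2 hp.2.1)
        have hinjF : Set.InjOn F ↑E := by
          intro p hp' p' hp'' he
          have hpE : p ∈ E := Finset.mem_coe.1 hp'
          have hp'E : p' ∈ E := Finset.mem_coe.1 hp''
          have hpm := (hmemE p).1 hpE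
          have hp'm := (hmemE p').1 hp'E
          by_cases h1 : (E.filter (fun q => q.1 = p.1)).card ≤ 1 <;>
            by_cases h2 : (E.filter (fun q => q.1 = p'.1)).card ≤ 1
          · -- both map to fst
            rw [hF] at he; simp only [h1, h2, if_true] at he
            have hm1 : p ∈ E.filter (fun q => q.1 = p.1) := Finset.mem_filter.2 ⟨hpE, rfl⟩
            have hm2 : p' ∈ E.filter (fun q => q.1 = p.1) := Finset.mem_filter.2 ⟨hp'E, he.symm⟩
            exact Finset.card_le_one.1 h1 p hm1 p' hm2
          · -- p ↦ p.1 ∈ A c, p' ↦ p'.2 ∈ A d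
            rw [hF] at he; simp only [h1, h2, if_true, if_false] at he
            have hd' : φ p.1 = d := by rw [he]; exact hp'm.2.1
            exact absurd (hpm.1.symm.trans hd') hcd
          · rw [hF] at he; simp only [h1, h2, if_true, if_false] at he
            have hd' : φ p'.1 = d := by rw [← he]; exact hpm.2.1
            exact absurd (hp'm.1.symm.trans hd') hcd
          · -- both map to snd
            rw [hF] at he; simp only [h1, h2, if_false] at he
            by_cases h12 : p.1 = p'.1
            · exact Prod.ext h12 he
            · exfalso
              obtain ⟨q, hqmem, hqne⟩ :=
                Finset.exists_mem_ne (by omega :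
                  1 < (E.filter (fun r => r.1 = p.1)).card) p
              rw [Finset.mem_filter] at hqmem
              obtain ⟨hqE, hq1⟩ := hqmem
              have hqm := (hmemE q).1 hqE
              have hq2 : q.2 ≠ p.2 := by
                intro e; exact hqne (Prod.ext hq1 e)
              have hxy : G.Adj q.2 p.1 := by
                have := hqm.2.2.symm; rw [hq1] at this; exact this
              have hzw : G.Adj p.2 p'.1 := by
                rw [he]; exact hp'm.2.2.symm
              exact thue_not_square4 h
                (x := q.2) (y := p.1) (z := p.2) (w := p'.1)
                hxy hpm.2.2 hzw hq2 h12
                (hqm.2.1.trans hpm.2.1.symm) (hpm.1.trans hp'm.1.symm)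
        have hp01 : p0.1 ∈ A c ∪ A d :=
          Finset.mem_union_left _ ((hmemA c p0.1).2 ((hmemE p0).1 hp0E).1)
        calc E.card ≤ ((A c ∪ A d).erase p0.1).card :=
              Finset.card_le_card_of_injOn F himg hinjF
          _ = (A c ∪ A d).card - 1 := Finset.card_erase_of_mem hp01
          _ = a c + a d - 1 := by rw [Finset.card_union_of_disjoint hdisjAB]
    -- sdiff
    have hsub2 : (A c ×ˢ A d) \ E ⊆ N.filter (fun p => (φ p.1, φ p.2) = (c, d)) := by
      intro p hp
      rw [Finset.mem_sdiff] at hp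
      have hpm := hp.1
      rw [Finset.mem_product, hmemA, hmemA] at hpm
      have hne : p.1 ≠ p.2 := fun e => hcd (hpm.1 ▸ hpm.2 ▸ e ▸ rfl)
      have hnadj : ¬ G.Adj p.1 p.2 := fun hadj =>
        hp.2 (Finset.mem_filter.2 ⟨hp.1, hadj⟩)
      simp only [hN, Finset.mem_filter, Finset.mem_univ, true_and]
      exact ⟨⟨hne, hnadj⟩, by rw [hpm.1, hpm.2]⟩
    have hcard2 : ((A c ×ˢ A d) \ E).card = a c * a d - E.card := by
      rw [Finset.card_sdiff_of_subset (Finset.filter_subset _ _), Finset.card_product]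
    obtain ⟨a1, h1⟩ : ∃ t, a c = t + 1 := ⟨a c - 1, by omega⟩
    obtain ⟨a2, h2⟩ : ∃ t, a d = t + 1 := ⟨a d - 1, by omega⟩
    have hb1 : b c = a1 := by simp only [hb]; omega
    have hb2 : b d = a2 := by simp only [hb]; omega
    have hfinal : a1 * a2 ≤ a c * a d - E.card := by
      have hprod : a c * a d = a1 * a2 + a1 + a2 + 1 := by rw [h1, h2]; ring
      omega
    calc b c * b d = a1 * a2 := by rw [hb1, hb2]
      _ ≤ a c * a d - E.card := hfinal
      _ = ((A c ×ˢ A d) \ E).card := hcard2.symm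
      _ ≤ _ := Finset.card_le_card hsub2
  -- summation
  set lower : Fin k × Fin k → ℕ :=
    fun q => if q.1 = q.2 then b q.1 * b q.1 + b q.1 else b q.1 * b q.2 with hlow
  have hql : ∀ q ∈ (Finset.univ : Finset (Fin k × Fin k)),
      lower q ≤ (N.filter (fun p => (φ p.1, φ p.2) = q)).card := by
    rintro ⟨c, d⟩ -
    rcases eq_or_ne c d with rfl | hne
    · simpa [hlow] using hdiag c
    · simpa [hlow, hne] using hcross c d hne
  have hNlow : ∑ q, lower q ≤ N.card := hfib ▸ Finset.sum_le_sum hql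
  set B := ∑ c, b c with hB
  have hsplit : ∑ q, lower q = (∑ c, (b c * b c + b c)) +
      ∑ q ∈ (Finset.univ : Finset (Fin k)).offDiag, b q.1 * b q.2 := by
    rw [← Finset.univ_product_univ, ← Finset.diag_union_offDiag,
      Finset.sum_union (Finset.disjoint_diag_offDiag _), Finset.sum_diag]
    congr 1
    · apply Finset.sum_congr rfl; intro c _; simp [hlow]
    · apply Finset.sum_congr rfl
      intro q hq
      rw [Finset.mem_offDiag] at hq
      simp [hlow, hq.2.2]
  have hBsq : B * B + B = ∑ q, lower q := by
    rw [hsplit]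
    have h1 : B * B = (∑ c, b c * b c) +
        ∑ q ∈ (Finset.univ : Finset (Fin k)).offDiag, b q.1 * b q.2 := by
      rw [hB, Finset.sum_mul_sum, ← Finset.sum_product']
      rw [← Finset.diag_union_offDiag,
        Finset.sum_union (Finset.disjoint_diag_offDiag _), Finset.sum_diag]
    rw [h1, Finset.sum_add_distrib]
    ring
  have hn_sum : ∑ c, a c = n := by
    have := Finset.card_eq_sum_card_fiberwise
      (f := φ) (s := Finset.univ) (t := Finset.univ) (fun x _ => Finset.mem_univ _)
    simpa [ha, hA] using this.symm
  have hnB : n ≤ B + k := by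
    have h1 : ∀ c : Fin k, a c ≤ b c + 1 := by intro c; simp only [hb]; omega
    calc n = ∑ c, a c := hn_sum.symm
      _ ≤ ∑ c, (b c + 1) := Finset.sum_le_sum (fun c _ => h1 c)
      _ = B + k := by
          rw [Finset.sum_add_distrib]
          simp [← hB, Finset.sum_const, Finset.card_univ]
  have hnkB : n - k ≤ B := by omega
  calc (n - k) * (n - k) + (n - k) ≤ B * B + B := by
        exact add_le_add (Nat.mul_le_mul hnkB hnkB) hnkB
    _ = ∑ q, lower q := hBsq
    _ ≤ N.card := hNlow


section S3
variable {n : ℕ}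

lemma card_nonadj_le {G : SimpleGraph (Fin n)} [DecidableRel G.Adj]
    (L : List (Sym2 (Fin n)))
    (hG : ∀ x y : Fin n, x ≠ y → ¬ G.Adj x y → s(x, y) ∈ L) :
    (Finset.univ.filter (fun p : Fin n × Fin n => p.1 ≠ p.2 ∧ ¬ G.Adj p.1 p.2)).card
      ≤ 2 * L.length := by
  classical
  set N := Finset.univ.filter (fun p : Fin n × Fin n => p.1 ≠ p.2 ∧ ¬ G.Adj p.1 p.2) with hN
  set f : Fin n × Fin n → Sym2 (Fin n) := fun p => s(p.1, p.2) with hf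
  have h1 : N.card ≤ 2 * (N.image f).card := by
    apply Finset.card_le_mul_card_image
    intro e he
    induction e using Sym2.ind with
    | _ x y =>
      have hsub : N.filter (fun p => f p = s(x, y)) ⊆ {(x, y), (y, x)} := by
        intro p hp
        rw [Finset.mem_filter] at hp
        have := hp.2
        rw [hf] at this
        rw [Sym2.eq_iff] at this
        rcases this with ⟨h1, h2⟩ | ⟨h1, h2⟩
        · simp [Prod.ext_iff, h1, h2]
        · simp [Prod.ext_iff, h1, h2]
      calc (N.filter (fun p => f p = s(x, y))).card ≤ ({(x, y), (y, x)} : Finset (Fin n × Fin n)).card :=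
            Finset.card_le_card hsub
        _ ≤ 2 := by
            apply le_trans (Finset.card_insert_le _ _)
            simp
  have h2 : N.image f ⊆ L.toFinset := by
    intro e he
    rw [Finset.mem_image] at he
    obtain ⟨p, hp, rfl⟩ := he
    rw [hN, Finset.mem_filter] at hp
    rw [List.mem_toFinset]
    exact hG p.1 p.2 hp.2.1 hp.2.2
  calc N.card ≤ 2 * (N.image f).card := h1
    _ ≤ 2 * L.toFinset.card := by
        have := Finset.card_le_card h2
        omega
    _ ≤ 2 * L.length := by
        have := L.toFinset_card_le
        omega

lemma exists_thue_id (G : SimpleGraph (Fin n)) (hn : 1 ≤ n) :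
    ∃ φ : Fin n → Fin n, IsThueColoring G φ := by
  refine ⟨fun x => x, isThue_of_almostInj ⟨0, by omega⟩ ?_ ?_⟩
  · intro a b hab
    simpa using G.ne_of_adj hab
  · intro x y hxy
    exact Or.inl hxy

/-- Decidability instance for adjacency of the delete-edges graphs we use. -/
noncomputable local instance instDecDel (L : List (Sym2 (Fin n))) :
    DecidableRel ((completeGraph (Fin n)).deleteEdges {e | e ∈ L}).Adj := by
  classical
  exact fun x y => inferInstance

lemma lower_bd (hn : 2 ≤ n) {v : ℕ} (hv1 : 1 ≤ v) (hvn : v ≤ n)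
    (L : List (Sym2 (Fin n))) (hlen : 2 * L.length + 2 ≤ v * v + v) :
    n - v + 1 ≤ thueNumber ((completeGraph (Fin n)).deleteEdges {e | e ∈ L}) := by
  classical
  apply le_thueNumber ⟨n, exists_thue_id _ (by omega)⟩
  intro k φ hφ
  by_contra hk
  push_neg at hk
  have hvk : v ≤ n - k := by omega
  have h1 := key_bound hφ
  have h2 := card_nonadj_le (G := (completeGraph (Fin n)).deleteEdges {e | e ∈ L}) L ?_
  · have hmono : v * v + v ≤ (n - k) * (n - k) + (n - k) :=
      add_le_add (Nat.mul_le_mul hvk hvk) hvk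
    omega
  · intro x y hxy hnadj
    rw [SimpleGraph.deleteEdges_adj] at hnadj
    push_neg at hnadj
    exact hnadj (by simpa [completeGraph] using hxy)

lemma upper_bd {m : ℕ} (G : SimpleGraph (Fin n)) (hm : 1 ≤ m) (hmn : m ≤ n)
    (hind : ∀ x y : Fin n, x.val < m → y.val < m → ¬ G.Adj x y) :
    thueNumber G ≤ n - m + 1 := by
  have hpos : 0 < n - m + 1 := by omega
  set φ : Fin n → Fin (n - m + 1) := fun x =>
    if h : x.val < m then ⟨0, hpos⟩ else ⟨x.val - m + 1, by have := x.isLt; omega⟩ with hφ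
  have hval : ∀ x : Fin n, ¬ x.val < m → (φ x).val = x.val - m + 1 := by
    intro x hx; simp [hφ, hx]
  have hval0 : ∀ x : Fin n, x.val < m → (φ x).val = 0 := by
    intro x hx; simp [hφ, hx]
  apply thueNumber_le φ
  apply isThue_of_almostInj ⟨0, hpos⟩
  · intro x y hadj
    have hne : x ≠ y := G.ne_of_adj hadj
    by_cases hx : x.val < m <;> by_cases hy : y.val < m
    · exact absurd hadj (hind x y hx hy)
    · intro e
      have := congrArg Fin.val e
      rw [hval0 x hx, hval y hy] at this
      omega
    · intro e
      have := congrArg Fin.val e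
      rw [hval x hx, hval0 y hy] at this
      omega
    · intro e
      have := congrArg Fin.val e
      rw [hval x hx, hval y hy] at this
      have hxy : x.val = y.val := by have := x.isLt; have := y.isLt; omega
      exact hne (Fin.ext hxy)
  · intro x y hxy
    by_cases hx : x.val < m
    · right; exact Fin.ext (hval0 x hx)
    · by_cases hy : y.val < m
      · exfalso
        have := congrArg Fin.val hxy
        rw [hval x hx, hval0 y hy] at this
        omega
      · left
        have := congrArg Fin.val hxy
        rw [hval x hx, hval y hy] at this
        exact Fin.ext (by omega)

end S3


section S4

/-- the vertex `m % n` of `Fin n` -/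
def eV (n : ℕ) [NeZero n] (m : ℕ) : Fin n :=
  ⟨m % n, Nat.mod_lt _ (Nat.pos_of_ne_zero (NeZero.ne n))⟩

lemma eV_val {n : ℕ} [NeZero n] {m : ℕ} (h : m < n) : (eV n m).val = m :=
  Nat.mod_eq_of_lt h

/-- block of edges ending at vertex `v` -/
def blk (n : ℕ) [NeZero n] (v : ℕ) : List (Sym2 (Fin n)) :=
  (List.range v).map (fun c => s(eV n c, eV n v))

/-- concatenation of the first `v` blocks -/
def pre (n : ℕ) [NeZero n] (v : ℕ) : List (Sym2 (Fin n)) :=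
  (List.range v).flatMap (blk n)

/-- the chosen edge ordering of `K_n` -/
def ordL (n : ℕ) [NeZero n] : List (Sym2 (Fin n)) := pre n n

lemma choose2_succ (v : ℕ) : (v + 1).choose 2 = v.choose 2 + v := by
  rw [Nat.choose_succ_succ' v 1, Nat.choose_one_right]
  rw [show (1 + 1 : ℕ) = 2 from rfl]
  omega

lemma two_choose2 (v : ℕ) : 2 * v.choose 2 = v * (v - 1) := by
  induction v with
  | zero => simp
  | succ w ih =>
    rw [choose2_succ, Nat.mul_add, ih]
    cases w with
    | zero => simp
    | succ u =>
      simp only [Nat.succ_sub_one]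
      ring

lemma blk_length (n : ℕ) [NeZero n] (v : ℕ) : (blk n v).length = v := by
  simp [blk]

lemma pre_length (n : ℕ) [NeZero n] (v : ℕ) : (pre n v).length = v.choose 2 := by
  induction v with
  | zero => simp [pre]
  | succ w ih =>
    rw [pre, List.range_succ, List.flatMap_append, List.length_append]
    rw [choose2_succ]
    simp only [List.flatMap_cons, List.flatMap_nil, List.append_nil]
    rw [← pre, ih, blk_length]

lemma ordL_length (n : ℕ) [NeZero n] : (ordL n).length = n.choose 2 := pre_length n n

lemma ordL_split {n v : ℕ} [NeZero n] (hv : v ≤ n) :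
    ∃ t, ordL n = pre n v ++ t := by
  obtain ⟨w, rfl⟩ : ∃ w, n = v + w := ⟨n - v, by omega⟩
  refine ⟨((List.range w).map (v + ·)).flatMap (blk (v + w)), ?_⟩
  rw [ordL, pre, List.range_add, List.flatMap_append]
  rfl

lemma mem_pre {n v : ℕ} [NeZero n] {x y : Fin n} (hxy : x ≠ y)
    (hx : x.val < v) (hy : y.val < v) : s(x, y) ∈ pre n v := by
  -- wlog x.val < y.val
  have main : ∀ x y : Fin n, x.val < y.val → y.val < v → s(x, y) ∈ pre n v := by
    intro x y hlt hyv
    rw [pre, List.mem_flatMap]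
    refine ⟨y.val, List.mem_range.2 hyv, ?_⟩
    rw [blk, List.mem_map]
    refine ⟨x.val, List.mem_range.2 hlt, ?_⟩
    have h1 : eV n x.val = x := Fin.ext (eV_val x.isLt)
    have h2 : eV n y.val = y := Fin.ext (eV_val y.isLt)
    rw [h1, h2]
  rcases Nat.lt_or_ge x.val y.val with h | h
  · exact main x y h hy
  · have hlt : y.val < x.val := by
      have hvne : x.val ≠ y.val := fun e => hxy (Fin.ext e)
      omega
    rw [Sym2.eq_swap]
    exact main y x hlt hx

lemma mem_ordL_iff {n : ℕ} [NeZero n] (e : Sym2 (Fin n)) :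
    e ∈ ordL n ↔ e ∈ (completeGraph (Fin n)).edgeSet := by
  induction e using Sym2.ind with
  | _ x y =>
    rw [SimpleGraph.mem_edgeSet]
    constructor
    · intro he
      rw [ordL, pre, List.mem_flatMap] at he
      obtain ⟨v, hv, he⟩ := he
      rw [blk, List.mem_map] at he
      obtain ⟨c, hc, he⟩ := he
      rw [List.mem_range] at hv hc
      have hne : eV n c ≠ eV n v := by
        intro hEq
        have := congrArg Fin.val hEq
        rw [eV_val (by omega), eV_val hv] at this
        omega
      have : s(x, y) = s(eV n c, eV n v) := he.symm
      rw [Sym2.eq_iff] at this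
      rcases this with ⟨h1, h2⟩ | ⟨h1, h2⟩
      · simpa [completeGraph, h1, h2] using hne
      · simpa [completeGraph, h1, h2] using hne.symm
    · intro he
      have hne : x ≠ y := by simpa [completeGraph] using he
      exact mem_pre hne x.isLt y.isLt

lemma ordL_nodup (n : ℕ) [NeZero n] : (ordL n).Nodup := by
  rw [ordL, pre, List.nodup_flatMap]
  constructor
  · intro v hv
    rw [List.mem_range] at hv
    apply List.Nodup.map_on _ (List.nodup_range (n := v))
    intro c hc c' hc' hEq
    rw [List.mem_range] at hc hc'
    rw [Sym2.eq_iff] at hEq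
    rcases hEq with ⟨h1, _⟩ | ⟨h1, h2⟩
    · have := congrArg Fin.val h1
      rwa [eV_val (by omega), eV_val (by omega)] at this
    · have e1 := congrArg Fin.val h1
      have e2 := congrArg Fin.val h2
      rw [eV_val (by omega), eV_val hv] at e1
      rw [eV_val hv, eV_val (by omega)] at e2
      omega
  · apply List.Pairwise.imp_of_mem _ (List.pairwise_lt_range (n := n))
    intro v w hv hw hlt
    rw [List.mem_range] at hv hw
    intro e hev hew
    rw [blk, List.mem_map] at hev hew
    obtain ⟨c, hc, hec⟩ := hev
    obtain ⟨d, hd, hed⟩ := hew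
    rw [List.mem_range] at hc hd
    rw [← hed] at hec
    rw [Sym2.eq_iff] at hec
    rcases hec with ⟨h1, h2⟩ | ⟨h1, h2⟩
    · have := congrArg Fin.val h2
      rw [eV_val hv, eV_val hw] at this
      omega
    · have e1 := congrArg Fin.val h1
      have e2 := congrArg Fin.val h2
      rw [eV_val (by omega), eV_val hw] at e1
      rw [eV_val hv, eV_val (by omega)] at e2
      omega

lemma mem_take_ordL {n v i : ℕ} [NeZero n] (hv : v ≤ n) (hi : v.choose 2 ≤ i)
    {x y : Fin n} (hxy : x ≠ y) (hx : x.val < v) (hy : y.val < v) :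
    s(x, y) ∈ (ordL n).take i := by
  obtain ⟨t, ht⟩ := ordL_split hv
  rw [ht, List.take_append]
  apply List.mem_append_left
  rw [List.take_of_length_le (by rw [pre_length]; exact hi)]
  exact mem_pre hxy hx hy

-- partition of a range into consecutive blocks
lemma sum_blocks {M : Type*} [AddCommMonoid M] (g : ℕ → M) (m : ℕ) :
    ∑ i ∈ Finset.range (m.choose 2), g i
      = ∑ v ∈ Finset.range m, ∑ i ∈ Finset.Ico (v.choose 2) ((v + 1).choose 2), g i := by
  induction m with
  | zero => simp
  | succ w ih =>
    rw [Finset.sum_range_succ, ← ih, Finset.range_eq_Ico, Finset.range_eq_Ico]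
    exact (Finset.sum_Ico_consecutive g (Nat.zero_le _)
      (Nat.choose_le_choose 2 (Nat.le_succ w))).symm

lemma block_exists {m i : ℕ} (hm : 1 ≤ m) (hi : i ≤ m.choose 2) :
    ∃ v, 1 ≤ v ∧ v ≤ m ∧ v.choose 2 ≤ i ∧ i < (v + 1).choose 2 := by
  induction m with
  | zero => omega
  | succ w ih =>
    rcases Nat.lt_or_ge i ((w + 1).choose 2) with h | h
    · rcases Nat.eq_zero_or_pos w with rfl | hw
      · have h10 : ((0 + 1 : ℕ)).choose 2 = 0 := by decide
        have hi0 : i = 0 := by omega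
        exact ⟨1, by omega, by omega, by omega, by rw [hi0]; decide⟩
      · rcases Nat.lt_or_ge i (w.choose 2) with h2 | h2
        · obtain ⟨v, h3⟩ := ih hw (by omega)
          exact ⟨v, h3.1, by omega, h3.2.2⟩
        · exact ⟨w, hw, by omega, h2, h⟩
    · have : i = (w + 1).choose 2 := by omega
      refine ⟨w + 1, by omega, le_refl _, by omega, ?_⟩
      rw [choose2_succ]
      omega

end S4


lemma peel0 {M : Type*} [AddCommMonoid M] (f : ℕ → M) {m : ℕ} (hm : 1 ≤ m) :
    ∑ v ∈ Finset.range m, f v = (∑ v ∈ Finset.range (m - 1), f (v + 1)) + f 0 := by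
  obtain ⟨w, rfl⟩ : ∃ w, m = w + 1 := ⟨m - 1, by omega⟩
  simpa using Finset.sum_range_succ' f w


/-- the τ-index of the complete graph `K_n`, `n ≥ 2`, equals
`(Σ_{i=0}^{n−2} (i+1)(n−i) + 1) / (n(n−1)/2 + 1)`; moreover the minimum is achieved
by an edge ordering whose Thue sequence takes the value `n − ℓ` exactly `ℓ + 1` times
for each `ℓ = 0, …, n−2`, followed by a final value `1`. -/
theorem tauIndex_completeGraph (n : ℕ) (hn : 2 ≤ n) :
    tauIndex (completeGraph (Fin n)) =
      ((∑ i ∈ Finset.range (n - 1), ((i : ℝ) + 1) * ((n : ℝ) - i)) + 1) /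
        ((n : ℝ) * ((n : ℝ) - 1) / 2 + 1) ∧
    ∃ l : List (Sym2 (Fin n)), IsEdgeOrdering (completeGraph (Fin n)) l ∧
      tauValue (completeGraph (Fin n)) l = tauIndex (completeGraph (Fin n)) ∧
      (∀ ℓ ≤ n - 2, {i : ℕ | i ≤ l.length ∧
          thueNumber ((completeGraph (Fin n)).deleteEdges {e | e ∈ l.take i}) = n - ℓ}.ncard
        = ℓ + 1) ∧
      thueNumber ((completeGraph (Fin n)).deleteEdges {e | e ∈ l.take l.length}) = 1 := by
  haveI : NeZero n := ⟨by omega⟩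
  set K := completeGraph (Fin n) with hK
  set l := ordL n with hl
  have hεl : l.length = n.choose 2 := ordL_length n
  have hord : IsEdgeOrdering K l := ⟨ordL_nodup n, fun e => mem_ordL_iff e⟩
  have h2ε : 2 * n.choose 2 = n * (n - 1) := two_choose2 n
  -- exact stage values for the chosen ordering
  have hpi : ∀ v i, 1 ≤ v → v ≤ n → v.choose 2 ≤ i → i < (v + 1).choose 2 →
      thueNumber (K.deleteEdges {e | e ∈ l.take i}) = n - v + 1 := by
    intro v i hv1 hvn hT1 hT2
    apply le_antisymm
    · apply upper_bd _ hv1 hvn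
      intro x y hx hy hadj
      have hne : x ≠ y := (K.deleteEdges _).ne_of_adj hadj
      rw [SimpleGraph.deleteEdges_adj] at hadj
      exact hadj.2 (mem_take_ordL hvn hT1 hne hx hy)
    · apply lower_bd hn hv1 hvn
      have hlen2 : (l.take i).length ≤ i := by rw [List.length_take]; omega
      have ht : 2 * ((v + 1).choose 2) = v * v + v := by
        have h1 := two_choose2 (v + 1)
        have h2 : (v + 1) * (v + 1 - 1) = v * v + v := by
          simp only [Nat.add_sub_cancel]; ring
        omega
      omega
  set SN : ℕ := (∑ ℓ ∈ Finset.range (n - 1), (ℓ + 1) * (n - ℓ)) + 1 with hSN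
  -- the sum for the chosen ordering
  have hsum_l : ∑ i ∈ Finset.range (l.length + 1),
      thueNumber (K.deleteEdges {e | e ∈ l.take i}) = SN := by
    rw [hεl, Finset.sum_range_succ]
    have hlast : thueNumber (K.deleteEdges {e | e ∈ l.take (n.choose 2)}) = 1 := by
      have h := hpi n (n.choose 2) (by omega) le_rfl le_rfl
        (by rw [choose2_succ]; omega)
      simpa using h
    rw [hlast, sum_blocks, peel0 _ (by omega : 1 ≤ n)]
    have hB : Finset.Ico ((0 : ℕ).choose 2) (((0 : ℕ) + 1).choose 2) = ∅ := by decide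
    rw [hB, Finset.sum_empty, add_zero, hSN]
    congr 1
    apply Finset.sum_congr rfl
    intro ℓ hℓ
    rw [Finset.mem_range] at hℓ
    have hval : ∀ i ∈ Finset.Ico ((ℓ + 1).choose 2) ((ℓ + 1 + 1).choose 2),
        thueNumber (K.deleteEdges {e | e ∈ l.take i}) = n - ℓ := by
      intro i hi
      rw [Finset.mem_Ico] at hi
      have h := hpi (ℓ + 1) i (by omega) (by omega) hi.1 hi.2
      have heq : n - (ℓ + 1) + 1 = n - ℓ := by omega
      rw [h, heq]
    rw [Finset.sum_congr rfl hval, Finset.sum_const, Nat.card_Ico]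
    have hch : (ℓ + 1 + 1).choose 2 = (ℓ + 1).choose 2 + (ℓ + 1) := choose2_succ (ℓ + 1)
    have hcard : (ℓ + 1 + 1).choose 2 - (ℓ + 1).choose 2 = ℓ + 1 := by omega
    rw [hcard, smul_eq_mul]
  -- length of any ordering
  have hlen_any : ∀ l' : List (Sym2 (Fin n)), IsEdgeOrdering K l' → l'.length = n.choose 2 := by
    intro l' h'
    have hfe : l'.toFinset = l.toFinset := by
      ext e
      rw [List.mem_toFinset, List.mem_toFinset, h'.2, hord.2]
    calc l'.length = l'.toFinset.card := (List.toFinset_card_of_nodup h'.1).symm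
      _ = l.toFinset.card := by rw [hfe]
      _ = l.length := List.toFinset_card_of_nodup hord.1
      _ = n.choose 2 := hεl
  -- lower bound for arbitrary orderings
  have hsum_ge : ∀ l' : List (Sym2 (Fin n)), IsEdgeOrdering K l' →
      SN ≤ ∑ i ∈ Finset.range (l'.length + 1),
        thueNumber (K.deleteEdges {e | e ∈ l'.take i}) := by
    intro l' h'
    rw [hlen_any l' h', Finset.sum_range_succ]
    have hlast : 1 ≤ thueNumber (K.deleteEdges {e | e ∈ l'.take (n.choose 2)}) := by
      have h := lower_bd hn (v := n) (by omega) le_rfl (l'.take (n.choose 2)) ?_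
      · simpa using h
      · have h1 : (l'.take (n.choose 2)).length ≤ n.choose 2 := by
          rw [List.length_take]; omega
        have h2 : (n : ℕ) * (n - 1) + 2 ≤ n * n + n := by
          have : n * (n - 1) + n = n * n := by
            cases n with
            | zero => simp
            | succ w => simp only [Nat.add_sub_cancel]; ring
          omega
        omega
    have hmain : ∑ ℓ ∈ Finset.range (n - 1), (ℓ + 1) * (n - ℓ) ≤
        ∑ i ∈ Finset.range (n.choose 2),
          thueNumber (K.deleteEdges {e | e ∈ l'.take i}) := by
      rw [sum_blocks, peel0 _ (by omega : 1 ≤ n)]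
      have hstep : ∀ ℓ ∈ Finset.range (n - 1), (ℓ + 1) * (n - ℓ) ≤
          ∑ i ∈ Finset.Ico ((ℓ + 1).choose 2) ((ℓ + 1 + 1).choose 2),
            thueNumber (K.deleteEdges {e | e ∈ l'.take i}) := by
        intro ℓ hℓ
        rw [Finset.mem_range] at hℓ
        have hbd : ∀ i ∈ Finset.Ico ((ℓ + 1).choose 2) ((ℓ + 1 + 1).choose 2),
            n - ℓ ≤ thueNumber (K.deleteEdges {e | e ∈ l'.take i}) := by
          intro i hi
          rw [Finset.mem_Ico] at hi
          have hcond : 2 * (l'.take i).length + 2 ≤ (ℓ + 1) * (ℓ + 1) + (ℓ + 1) := by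
            have h1 : (l'.take i).length ≤ i := by rw [List.length_take]; omega
            have hch : (ℓ + 1 + 1).choose 2 = (ℓ + 1).choose 2 + (ℓ + 1) := choose2_succ (ℓ + 1)
            have h2 := two_choose2 (ℓ + 1 + 1)
            have h3 : (ℓ + 1 + 1) * (ℓ + 1 + 1 - 1) = (ℓ + 1) * (ℓ + 1) + (ℓ + 1) := by
              simp only [Nat.add_sub_cancel]; ring
            omega
          have h := lower_bd hn (v := ℓ + 1) (by omega) (by omega) (l'.take i) hcond
          have heq : n - (ℓ + 1) + 1 = n - ℓ := by omega
          rwa [heq] at h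
        have hsm := Finset.card_nsmul_le_sum _ _ _ hbd
        rw [Nat.card_Ico] at hsm
        have hch : (ℓ + 1 + 1).choose 2 = (ℓ + 1).choose 2 + (ℓ + 1) := choose2_succ (ℓ + 1)
        have hcard : (ℓ + 1 + 1).choose 2 - (ℓ + 1).choose 2 = ℓ + 1 := by omega
        rw [hcard, smul_eq_mul] at hsm
        exact hsm
      calc ∑ ℓ ∈ Finset.range (n - 1), (ℓ + 1) * (n - ℓ)
          ≤ ∑ ℓ ∈ Finset.range (n - 1), ∑ i ∈ Finset.Ico ((ℓ + 1).choose 2)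
              ((ℓ + 1 + 1).choose 2),
              thueNumber (K.deleteEdges {e | e ∈ l'.take i}) := Finset.sum_le_sum hstep
        _ ≤ _ := Nat.le_add_right _ _
    omega
  -- real casts
  have hcastSN : (SN : ℝ) =
      (∑ i ∈ Finset.range (n - 1), ((i : ℝ) + 1) * ((n : ℝ) - i)) + 1 := by
    rw [hSN, Nat.cast_add, Nat.cast_one, Nat.cast_sum]
    congr 1
    apply Finset.sum_congr rfl
    intro i hi
    rw [Finset.mem_range] at hi
    rw [Nat.cast_mul, Nat.cast_sub (by omega : i ≤ n)]
    push_cast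
    ring
  have hden : ((n.choose 2 : ℕ) : ℝ) = (n : ℝ) * ((n : ℝ) - 1) / 2 := by
    have h1 : ((2 * n.choose 2 : ℕ) : ℝ) = ((n * (n - 1) : ℕ) : ℝ) := by rw [h2ε]
    rw [Nat.cast_mul, Nat.cast_mul, Nat.cast_sub (by omega : 1 ≤ n)] at h1
    push_cast at h1
    linarith
  set T : ℝ := (SN : ℝ) / ((n.choose 2 : ℝ) + 1) with hT
  have htval : tauValue K l = T := by
    unfold tauValue
    rw [← Nat.cast_sum, hsum_l, hεl, hT]
  have hpos : (0 : ℝ) < (n.choose 2 : ℝ) + 1 := by positivity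
  have hlb : ∀ x ∈ {x | ∃ l' : List (Sym2 (Fin n)), IsEdgeOrdering K l' ∧ tauValue K l' = x},
      T ≤ x := by
    rintro x ⟨l', h', rfl⟩
    unfold tauValue
    rw [← Nat.cast_sum, hlen_any l' h', hT]
    have hge := hsum_ge l' h'
    rw [hlen_any l' h'] at hge
    gcongr
  have htidx : tauIndex K = T := by
    unfold tauIndex
    exact IsLeast.csInf_eq ⟨⟨l, hord, htval⟩, hlb⟩
  refine ⟨?_, l, hord, htval.trans htidx.symm, ?_, ?_⟩
  · rw [htidx, hT, hcastSN, hden]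
  · -- multiplicity of each value in the Thue sequence
    intro ℓ hℓ
    have hset : {i : ℕ | i ≤ l.length ∧
        thueNumber (K.deleteEdges {e | e ∈ l.take i}) = n - ℓ}
          = ↑(Finset.Ico ((ℓ + 1).choose 2) ((ℓ + 2).choose 2)) := by
      ext i
      simp only [Set.mem_setOf_eq, Finset.coe_Ico, Set.mem_Ico]
      constructor
      · rintro ⟨hi, he⟩
        rw [hεl] at hi
        obtain ⟨v, hv1, hvn, hvT1, hvT2⟩ := block_exists (by omega : 1 ≤ n) hi
        rw [hpi v i hv1 hvn hvT1 hvT2] at he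
        have hveq : v = ℓ + 1 := by omega
        subst hveq
        exact ⟨hvT1, hvT2⟩
      · rintro ⟨h1, h2⟩
        have hch : (ℓ + 2).choose 2 ≤ n.choose 2 :=
          Nat.choose_le_choose 2 (by omega)
        refine ⟨by rw [hεl]; omega, ?_⟩
        have h := hpi (ℓ + 1) i (by omega) (by omega) h1 h2
        have heq : n - (ℓ + 1) + 1 = n - ℓ := by omega
        rw [h, heq]
    rw [hset, Set.ncard_coe_finset, Nat.card_Ico]
    have hch : (ℓ + 2).choose 2 = (ℓ + 1).choose 2 + (ℓ + 1) := choose2_succ (ℓ + 1)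
    omega
  · -- final value 1
    have h := hpi n l.length (by omega) le_rfl (by omega)
      (by rw [choose2_succ]; omega)
    simpa using h
end

section
/- For the path P_n on n ≥ 3 vertices, the Thue reach equals the diameter: π_R(P_n) = diam(P_n) = n − 1. In particular, there exists a Thue colouring of P_n using exactly π(P_n) colours in which the two end vertices receive the same colour. -/
open SimpleGraph Function

/-- The Thue reach `π_R(G)`: the maximum, over all Thue colourings `φ` of `G` using
exactly `π(G)` colours and all pairs of distinct equally coloured vertices `u, v`, of
the distance `d_G(u,v)` (equivalently, the maximum of the positive Thue colour
diameters `π_D(c)`). -/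
noncomputable def thueReach {V : Type*} (G : SimpleGraph V) : ℕ :=
  sSup {d | 0 < d ∧ ∃ φ : V → Fin (thueNumber G), Function.Surjective φ ∧
    IsThueColoring G φ ∧ ∃ u v : V, u ≠ v ∧ φ u = φ v ∧ G.dist u v = d}

def tm : ℕ → Bool
  | 0 => false
  | (n+1) => xor (((n+1) % 2) == 1) (tm ((n+1)/2))
decreasing_by exact Nat.div_lt_self (Nat.succ_pos n) one_lt_two

lemma tm_zero : tm 0 = false := by rw [tm]

lemma tm_rec (n : ℕ) (h : 0 < n) : tm n = xor ((n % 2) == 1) (tm (n/2)) := by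
  obtain ⟨m, rfl⟩ := Nat.exists_eq_add_of_lt h
  simp only [Nat.zero_add]
  rw [tm]

lemma tm_two_mul (n : ℕ) : tm (2*n) = tm n := by
  rcases Nat.eq_zero_or_pos n with rfl | h
  · rw [show 2*0 = 0 by omega]
  · rw [tm_rec (2*n) (by omega)]
    simp [Nat.mul_div_cancel_left, Nat.mul_mod_right]

lemma tm_two_mul_add_one (n : ℕ) : tm (2*n+1) = !tm n := by
  rw [tm_rec (2*n+1) (by omega)]
  have h1 : (2*n+1) % 2 = 1 := by omega
  have h2 : (2*n+1) / 2 = n := by omega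
  rw [h1, h2]
  simp [Bool.xor_comm]

lemma tm_double_odd {j : ℕ} (h : tm j = tm (j+1)) : j % 2 = 1 := by
  by_contra hodd
  have h2 : j % 2 = 0 := by omega
  obtain ⟨a, rfl⟩ : ∃ a, j = 2*a := ⟨j/2, by omega⟩
  rw [tm_two_mul, tm_two_mul_add_one] at h
  simp at h

lemma tm_no_triple (j : ℕ) (h1 : tm j = tm (j+1)) (h2 : tm (j+1) = tm (j+2)) : False := by
  have o1 := tm_double_odd h1
  have o2 := tm_double_odd h2
  omega

lemma tm_four_mul (r : ℕ) : tm (4*r) ≠ tm (4*r+2) := by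
  have A : tm (4*r) = tm r := by
    rw [show 4*r = 2*(2*r) by ring, tm_two_mul, tm_two_mul]
  have B : tm (4*r+2) = !tm r := by
    rw [show 4*r+2 = 2*(2*r+1) by ring, tm_two_mul, tm_two_mul_add_one]
  rw [A, B]; simp

lemma bool_alt {a b c : Bool} (h1 : a ≠ b) (h2 : b ≠ c) : a = c := by
  cases a <;> cases b <;> cases c <;> simp_all

theorem tm_no_overlap : ∀ p, 1 ≤ p → ∀ i, (∀ k ≤ p, tm (i+k) = tm (i+k+p)) → False := by
  intro p
  induction p using Nat.strong_induction_on with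
  | _ p IH =>
  intro hp i H
  rcases Nat.even_or_odd p with ⟨q, hq⟩ | hodd
  · -- p even
    have hq1 : 1 ≤ q := by omega
    have hqp : q < p := by omega
    rcases Nat.even_or_odd i with ⟨x, hx⟩ | ⟨x, hx⟩
    · refine IH q hqp hq1 x ?_
      intro j hj
      have := H (2*j) (by omega)
      have e1 : i + 2*j = 2*(x+j) := by omega
      have e2 : i + 2*j + p = 2*(x+j+q) := by omega
      rw [e2, e1, tm_two_mul, tm_two_mul] at this
      exact this
    · refine IH q hqp hq1 x ?_
      intro j hj
      have := H (2*j) (by omega)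
      have e1 : i + 2*j = 2*(x+j)+1 := by omega
      have e2 : i + 2*j + p = 2*(x+j+q)+1 := by omega
      rw [e2, e1, tm_two_mul_add_one, tm_two_mul_add_one] at this
      simpa using this
  · -- p odd
    have step1 : ∀ d, d < p → tm (i+d) ≠ tm (i+d+1) := by
      intro d hd heq
      have o1 : (i+d) % 2 = 1 := tm_double_odd heq
      have h1 := H d (by omega)
      have h2 := H (d+1) (by omega)
      have h2' : tm (i+d+1) = tm (i+d+p+1) := by
        rw [show i+d+1 = i+(d+1) by ring, show i+d+p+1 = i+(d+1)+p by ring]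
        exact h2
      have heq2 : tm (i+d+p) = tm (i+d+p+1) := h1.symm.trans (heq.trans h2')
      have o2 : (i+d+p) % 2 = 1 := tm_double_odd heq2
      obtain ⟨c, hc⟩ := hodd
      omega
    by_cases hp1 : p = 1
    · subst hp1
      exact tm_no_triple i (by simpa using H 0 (by omega)) (by simpa using H 1 (by omega))
    have hp3 : 3 ≤ p := by
      obtain ⟨c, hc⟩ := hodd; omega
    have step2 : ∀ d, d + 2 ≤ p → tm (i+d) = tm (i+d+2) := by
      intro d hd
      have a := step1 d (by omega)
      have b := step1 (d+1) (by omega)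
      rw [show i+(d+1) = i+d+1 by ring, show i+d+1+1 = i+d+2 by ring] at b
      exact bool_alt a b
    by_cases hp5 : p = 3
    · subst hp5
      have a := step2 0 (by omega)
      have b := step1 2 (by omega)
      have c := H 0 (by omega)
      simp only [Nat.add_zero] at a c
      rw [show i+2+1 = i+3 by ring] at b
      rw [show i+0+3 = i+3 by omega] at c
      exact b (a.symm.trans c)
    · have hp5' : 5 ≤ p := by obtain ⟨c, hc⟩ := hodd; omega
      set d := (4 - i % 4) % 4 with hd
      have hd3 : d ≤ 3 := by omega
      have hmod : (i + d) % 4 = 0 := by omega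
      obtain ⟨r, hr⟩ : ∃ r, i + d = 4*r := ⟨(i+d)/4, by omega⟩
      have := step2 d (by omega)
      rw [hr] at this
      exact tm_four_mul r this

/-- The ternary squarefree sequence derived from Thue–Morse. -/
def u (n : ℕ) : Fin 3 := if tm n = tm (n+1) then 1 else if tm n then 0 else 2

lemma u_eq_one {n : ℕ} : u n = 1 ↔ tm n = tm (n+1) := by
  unfold u
  cases h : tm n <;> cases h1 : tm (n+1) <;> simp_all

lemma u_pair_eq {i j : ℕ} (h : u i = u j) (h1 : u i ≠ 1) :
    tm i = tm j ∧ tm (i+1) = tm (j+1) := by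
  unfold u at h h1
  cases hti : tm i <;> cases hti1 : tm (i+1) <;> cases htj : tm j <;> cases htj1 : tm (j+1) <;>
    simp_all

lemma u_eq_of_pairs {i j : ℕ} (h1 : tm i = tm j) (h2 : tm (i+1) = tm (j+1)) : u i = u j := by
  unfold u
  rw [h1, h2]

theorem u_squarefree (b m : ℕ) (hm : 1 ≤ m) (H : ∀ k < m, u (b+k) = u (b+m+k)) : False := by
  by_cases hall : ∀ k < m, u (b+k) = 1
  · have hb : tm b = tm (b+1) := u_eq_one.mp (by simpa using hall 0 hm)
    have hb1 : u (b+1) = 1 := by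
      rcases eq_or_lt_of_le hm with h | h
      · have := H 0 (by omega)
        rw [← h] at this
        simp only [Nat.add_zero] at this
        rw [← this]
        simpa using hall 0 (by omega)
      · exact hall 1 h
    exact tm_no_triple b hb (u_eq_one.mp hb1)
  · push_neg at hall
    obtain ⟨k0, hk0, hne⟩ := hall
    have anchor := u_pair_eq (H k0 hk0) hne
    -- Q j : tm (b+j) = tm (b+m+j)
    have step_up : ∀ j, j < m → tm (b+j) = tm (b+m+j) → tm (b+(j+1)) = tm (b+m+(j+1)) := by
      intro j hj hQ
      by_cases h1 : u (b+j) = 1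
      · have d1 : tm (b+j) = tm (b+j+1) := u_eq_one.mp h1
        have h2 : u (b+m+j) = 1 := (H j hj) ▸ h1
        have d2 : tm (b+m+j) = tm (b+m+j+1) := u_eq_one.mp h2
        rw [show b+(j+1) = b+j+1 by ring, show b+m+(j+1) = b+m+j+1 by ring]
        rw [← d1, ← d2]; exact hQ
      · have := (u_pair_eq (H j hj) h1).2
        rw [show b+(j+1) = b+j+1 by ring, show b+m+(j+1) = b+m+j+1 by ring]
        exact this
    have step_down : ∀ j, j < m → tm (b+(j+1)) = tm (b+m+(j+1)) → tm (b+j) = tm (b+m+j) := by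
      intro j hj hQ
      rw [show b+(j+1) = b+j+1 by ring, show b+m+(j+1) = b+m+j+1 by ring] at hQ
      by_cases h1 : u (b+j) = 1
      · have d1 : tm (b+j) = tm (b+j+1) := u_eq_one.mp h1
        have h2 : u (b+m+j) = 1 := (H j hj) ▸ h1
        have d2 : tm (b+m+j) = tm (b+m+j+1) := u_eq_one.mp h2
        rw [d1, d2]; exact hQ
      · exact (u_pair_eq (H j hj) h1).1
    have Qk0 : tm (b+k0) = tm (b+m+k0) := anchor.1
    have down : ∀ d, d ≤ k0 → tm (b+(k0-d)) = tm (b+m+(k0-d)) := by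
      intro d
      induction d with
      | zero => intro _; simpa using Qk0
      | succ d ih =>
        intro hd
        have h1 := ih (by omega)
        have e : k0 - d = (k0 - (d+1)) + 1 := by omega
        rw [e] at h1
        exact step_down _ (by omega) h1
    have Q0 : tm (b+0) = tm (b+m+0) := by simpa using down k0 le_rfl
    have Qall : ∀ j, j ≤ m → tm (b+j) = tm (b+m+j) := by
      intro j
      induction j with
      | zero => intro _; exact Q0
      | succ j ih =>
        intro hj
        exact step_up j (by omega) (ih (by omega))
    refine tm_no_overlap m hm b ?_
    intro k hk
    rw [show b+k+m = b+m+k by ring]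
    exact Qall k hk

lemma tm_pow_add : ∀ (K : ℕ) (r : ℕ), r < 2^K → tm (2^K + r) = !tm r := by
  intro K
  induction K with
  | zero =>
    intro r hr
    interval_cases r
    rw [show (2:ℕ)^0 + 0 = 2*0+1 from rfl, tm_two_mul_add_one]
  | succ K ih =>
    intro r hr
    rcases Nat.even_or_odd r with ⟨s, hs⟩ | ⟨s, hs⟩
    · have e : 2^(K+1) + r = 2*(2^K + s) := by subst hs; ring
      rw [e, tm_two_mul, ih s (by omega), hs, show s+s = 2*s by ring, tm_two_mul]
    · have e : 2^(K+1) + r = 2*(2^K + s) + 1 := by subst hs; ring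
      rw [e, tm_two_mul_add_one, ih s (by omega), hs, tm_two_mul_add_one]
lemma tm_pow_sub_one : ∀ K : ℕ, tm (2^K - 1) = decide (K % 2 = 1) := by
  intro K
  induction K with
  | zero => rw [show (2:ℕ)^0 - 1 = 0 from rfl, tm_zero]; simp
  | succ K ih =>
    have e : 2^(K+1) - 1 = 2*(2^K - 1) + 1 := by
      have : 1 ≤ 2^K := Nat.one_le_two_pow
      omega
    rw [e, tm_two_mul_add_one, ih]
    rcases Nat.mod_two_eq_zero_or_one K with h | h
    · simp [h, show (K+1) % 2 = 1 by omega]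
    · simp [h, show (K+1) % 2 = 0 by omega]

lemma tm_pow_sub_two (K : ℕ) (hK : 1 ≤ K) : tm (2^K - 2) = decide (K % 2 = 0) := by
  obtain ⟨J, rfl⟩ : ∃ J, K = J + 1 := ⟨K - 1, by omega⟩
  have e : 2^(J+1) - 2 = 2*(2^J - 1) := by
    have : 1 ≤ 2^J := Nat.one_le_two_pow
    simp [pow_succ]; omega
  rw [e, tm_two_mul, tm_pow_sub_one]
  rcases Nat.mod_two_eq_zero_or_one J with h | h
  · simp [h, show (J+1) % 2 = 1 by omega]
  · simp [h, show (J+1) % 2 = 0 by omega]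

lemma tm_pow_sub_three (K : ℕ) (hK : 2 ≤ K) : tm (2^K - 3) = decide (K % 2 = 0) := by
  obtain ⟨J, rfl⟩ : ∃ J, K = J + 1 := ⟨K - 1, by omega⟩
  have h2 : 2 ≤ 2^J := by
    calc 2 = 2^1 := rfl
    _ ≤ 2^J := Nat.pow_le_pow_right (by omega) (by omega)
  have e : 2^(J+1) - 3 = 2*(2^J - 2) + 1 := by
    simp [pow_succ]; omega
  rw [e, tm_two_mul_add_one, tm_pow_sub_two J (by omega)]
  rcases Nat.mod_two_eq_zero_or_one J with h | h
  · simp [h, show (J+1) % 2 = 1 by omega]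
  · simp [h, show (J+1) % 2 = 0 by omega]

lemma tm_pow_sub_four (K : ℕ) (hK : 2 ≤ K) : tm (2^K - 4) = decide (K % 2 = 1) := by
  obtain ⟨J, rfl⟩ : ∃ J, K = J + 1 := ⟨K - 1, by omega⟩
  have h2 : 2 ≤ 2^J := by
    calc 2 = 2^1 := rfl
    _ ≤ 2^J := Nat.pow_le_pow_right (by omega) (by omega)
  have e : 2^(J+1) - 4 = 2*(2^J - 2) := by
    simp [pow_succ]; omega
  rw [e, tm_two_mul, tm_pow_sub_two J (by omega)]
  rcases Nat.mod_two_eq_zero_or_one J with h | h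
  · simp [h, show (J+1) % 2 = 1 by omega]
  · simp [h, show (J+1) % 2 = 0 by omega]

lemma tm_pow_sub_five (K : ℕ) (hK : 3 ≤ K) : tm (2^K - 5) = decide (K % 2 = 0) := by
  obtain ⟨J, rfl⟩ : ∃ J, K = J + 1 := ⟨K - 1, by omega⟩
  have h2 : 4 ≤ 2^J := by
    calc 4 = 2^2 := rfl
    _ ≤ 2^J := Nat.pow_le_pow_right (by omega) (by omega)
  have e : 2^(J+1) - 5 = 2*(2^J - 3) + 1 := by
    simp [pow_succ]; omega
  rw [e, tm_two_mul_add_one, tm_pow_sub_three J (by omega)]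
  rcases Nat.mod_two_eq_zero_or_one J with h | h
  · simp [h, show (J+1) % 2 = 1 by omega]
  · simp [h, show (J+1) % 2 = 0 by omega]

lemma anchor_works (m a K : ℕ) (ham : a ≤ m) (ha2 : 2 ≤ a) (hbig : m + 2 < 2^K)
    (c1 : tm (2^K - a) = !tm (m-a)) (c2 : tm (2^K - (a-1)) = !tm (m-a+1)) :
    u (2^K - a) = u (2^K - a + m) := by
  have h2K : m + 2 < 2^K := hbig
  apply u_eq_of_pairs
  · rw [show 2^K - a + m = 2^K + (m-a) by omega, tm_pow_add K (m-a) (by omega), c1]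
  · rw [show 2^K - a + 1 = 2^K - (a-1) by omega,
      show 2^K - a + m + 1 = 2^K + (m-a+1) by omega, tm_pow_add K (m-a+1) (by omega), c2]

lemma two_pow_big (m c : ℕ) : m + 2 < 2^(2*m+12+c) := by
  calc m + 2 < 2^(m+2) := Nat.lt_two_pow_self
  _ ≤ 2^(2*m+12+c) := Nat.pow_le_pow_right (by omega) (by omega)

lemma exists_u_anchor2 (m : ℕ) (hm : 2 ≤ m) (hne : tm (m-2) ≠ tm (m-2+1)) :
    ∃ i, u i = u (i+m) := by
  cases hb : tm (m-2) <;> rw [hb] at hne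
  · have hm1 : tm (m-2+1) = true := by cases h' : tm (m-2+1) <;> simp_all
    exact ⟨2^(2*m+12) - 2,
      anchor_works m 2 (2*m+12) hm le_rfl (two_pow_big m 0)
        (by rw [tm_pow_sub_two _ (by omega), hb]; simp [show (2*m+12)%2 = 0 by omega])
        (by rw [show (2:ℕ) - 1 = 1 from rfl, tm_pow_sub_one, hm1]
            simp [show (2*m+12)%2 = 0 by omega])⟩
  · have hm1 : tm (m-2+1) = false := by cases h' : tm (m-2+1) <;> simp_all
    exact ⟨2^(2*m+13) - 2,
      anchor_works m 2 (2*m+13) hm le_rfl (two_pow_big m 1)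
        (by rw [tm_pow_sub_two _ (by omega), hb]; simp [show (2*m+13)%2 = 1 by omega])
        (by rw [show (2:ℕ) - 1 = 1 from rfl, tm_pow_sub_one, hm1]
            simp [show (2*m+13)%2 = 1 by omega])⟩

lemma exists_u_anchor4 (m : ℕ) (hm : 4 ≤ m) (hne : tm (m-4) ≠ tm (m-4+1)) :
    ∃ i, u i = u (i+m) := by
  cases hb : tm (m-4) <;> rw [hb] at hne
  · have hm1 : tm (m-4+1) = true := by cases h' : tm (m-4+1) <;> simp_all
    exact ⟨2^(2*m+13) - 4,
      anchor_works m 4 (2*m+13) hm (by omega) (two_pow_big m 1)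
        (by rw [tm_pow_sub_four _ (by omega), hb]; simp [show (2*m+13)%2 = 1 by omega])
        (by rw [show (4:ℕ) - 1 = 3 from rfl, tm_pow_sub_three _ (by omega), hm1]
            simp [show (2*m+13)%2 = 1 by omega])⟩
  · have hm1 : tm (m-4+1) = false := by cases h' : tm (m-4+1) <;> simp_all
    exact ⟨2^(2*m+12) - 4,
      anchor_works m 4 (2*m+12) hm (by omega) (two_pow_big m 0)
        (by rw [tm_pow_sub_four _ (by omega), hb]; simp [show (2*m+12)%2 = 0 by omega])
        (by rw [show (4:ℕ) - 1 = 3 from rfl, tm_pow_sub_three _ (by omega), hm1]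
            simp [show (2*m+12)%2 = 0 by omega])⟩

lemma exists_u_anchor5 (m : ℕ) (hm : 5 ≤ m) (hne : tm (m-5) ≠ tm (m-5+1)) :
    ∃ i, u i = u (i+m) := by
  cases hb : tm (m-5) <;> rw [hb] at hne
  · have hm1 : tm (m-5+1) = true := by cases h' : tm (m-5+1) <;> simp_all
    exact ⟨2^(2*m+12) - 5,
      anchor_works m 5 (2*m+12) hm (by omega) (two_pow_big m 0)
        (by rw [tm_pow_sub_five _ (by omega), hb]; simp [show (2*m+12)%2 = 0 by omega])
        (by rw [show (5:ℕ) - 1 = 4 from rfl, tm_pow_sub_four _ (by omega), hm1]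
            simp [show (2*m+12)%2 = 0 by omega])⟩
  · have hm1 : tm (m-5+1) = false := by cases h' : tm (m-5+1) <;> simp_all
    exact ⟨2^(2*m+13) - 5,
      anchor_works m 5 (2*m+13) hm (by omega) (two_pow_big m 1)
        (by rw [tm_pow_sub_five _ (by omega), hb]; simp [show (2*m+13)%2 = 1 by omega])
        (by rw [show (5:ℕ) - 1 = 4 from rfl, tm_pow_sub_four _ (by omega), hm1]
            simp [show (2*m+13)%2 = 1 by omega])⟩

lemma tm_one : tm 1 = true := by
  rw [show (1:ℕ) = 2*0+1 from rfl, tm_two_mul_add_one, tm_zero]; rfl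
lemma tm_two : tm 2 = true := by
  rw [show (2:ℕ) = 2*1 from rfl, tm_two_mul, tm_one]
lemma tm_three : tm 3 = false := by
  rw [show (3:ℕ) = 2*1+1 from rfl, tm_two_mul_add_one, tm_one]; rfl
lemma tm_four : tm 4 = true := by
  rw [show (4:ℕ) = 2*2 from rfl, tm_two_mul, tm_two]
lemma tm_five : tm 5 = false := by
  rw [show (5:ℕ) = 2*2+1 from rfl, tm_two_mul_add_one, tm_two]; rfl
lemma tm_six : tm 6 = false := by
  rw [show (6:ℕ) = 2*3 from rfl, tm_two_mul, tm_three]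

theorem exists_u_eq (m : ℕ) (hm : 3 ≤ m) : ∃ i, u i = u (i + m) := by
  by_cases h3 : m = 3
  · subst h3
    refine ⟨0, ?_⟩
    unfold u
    rw [show (0:ℕ)+3 = 3 from rfl, show (0:ℕ)+1 = 1 from rfl, show (3:ℕ)+1 = 4 from rfl,
      tm_zero, tm_one, tm_three, tm_four]
  by_cases h4 : m = 4
  · subst h4
    refine ⟨1, ?_⟩
    unfold u
    rw [show (1:ℕ)+4 = 5 from rfl, show (1:ℕ)+1 = 2 from rfl, show (5:ℕ)+1 = 6 from rfl,
      tm_one, tm_two, tm_five, tm_six]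
    simp
  have hm5 : 5 ≤ m := by omega
  by_cases hA : tm (m-2) = tm (m-2+1)
  · by_cases hB : tm (m-4) = tm (m-4+1)
    · refine exists_u_anchor5 m hm5 ?_
      intro h5
      apply tm_no_triple (m-5)
      · rw [show m-5+1 = m-5+1 from rfl]; exact h5
      · rw [show m-5+1 = m-4 by omega, show m-5+2 = m-4+1 by omega]; exact hB
    · exact exists_u_anchor4 m (by omega) hB
  · exact exists_u_anchor2 m (by omega) hA

theorem path_support {n : ℕ} {a b : Fin n} (p : (pathGraph n).Walk a b) (hp : p.IsPath) :
    (p.support.map Fin.val = List.range' a.val (p.length+1) ∧ b.val = a.val + p.length) ∨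
    (p.support.map Fin.val = (List.range' b.val (p.length+1)).reverse ∧
      a.val = b.val + p.length) := by
  induction p with
  | nil => left; simp
  | @cons a c b h q ih =>
    rw [SimpleGraph.Walk.cons_isPath_iff] at hp
    obtain ⟨hq, hna⟩ := hp
    have ihq := ih hq
    have hmem : ∀ x : ℕ, x ∈ q.support.map Fin.val → x ≠ a.val := by
      intro x hx hxa
      obtain ⟨y, hy, hyx⟩ := List.mem_map.mp hx
      exact hna (by rwa [show y = a from Fin.ext (by rw [hyx, hxa])] at hy)
    rcases (pathGraph_adj.mp h) with hadj | hadj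
    · -- ascending step : a.val + 1 = c.val
      have hq_asc : q.support.map Fin.val = List.range' c.val (q.length+1) ∧
          b.val = c.val + q.length := by
        rcases ihq with hh | ⟨hs, ha⟩
        · exact hh
        · rcases Nat.eq_zero_or_pos q.length with h0 | hpos
          · refine ⟨?_, by omega⟩
            rw [hs, h0]
            have hbc : b.val = c.val := by omega
            simp [hbc]
          · exfalso
            apply hmem a.val _ rfl
            rw [hs]
            simp only [List.mem_reverse, List.mem_range'_1]
            omega
      obtain ⟨hs, hb⟩ := hq_asc
      left
      refine ⟨?_, by rw [Walk.length_cons]; omega⟩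
      rw [Walk.support_cons, List.map_cons, Walk.length_cons, hs, ← hadj]
      simp [List.range'_succ]
    · -- descending step : c.val + 1 = a.val
      have hq_desc : q.support.map Fin.val = (List.range' b.val (q.length+1)).reverse ∧
          c.val = b.val + q.length := by
        rcases ihq with ⟨hs, hb⟩ | hh
        · rcases Nat.eq_zero_or_pos q.length with h0 | hpos
          · refine ⟨?_, by omega⟩
            rw [hs, h0]
            have hbc : b.val = c.val := by omega
            simp [hbc]
          · exfalso
            apply hmem a.val _ rfl
            rw [hs]
            simp only [List.mem_range'_1]
            omega
        · exact hh
      obtain ⟨hs, hc⟩ := hq_desc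
      right
      refine ⟨?_, by rw [Walk.length_cons]; omega⟩
      rw [Walk.support_cons, List.map_cons, Walk.length_cons, hs]
      rw [show q.length + 1 + 1 = (q.length + 1) + 1 from rfl]
      rw [List.range'_concat (s := b.val) (n := q.length+1)]
      rw [List.reverse_append, List.reverse_singleton, List.singleton_append]
      rw [show b.val + 1 * (q.length + 1) = a.val by omega]

lemma pathGraph_exists_walk {n : ℕ} : ∀ (d : ℕ) (a b : Fin n), a.val + d = b.val →
    ∃ w : (pathGraph n).Walk a b, w.length = d := by
  intro d
  induction d with
  | zero =>
    intro a b hab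
    have : a = b := Fin.ext (by omega)
    subst this
    exact ⟨Walk.nil, rfl⟩
  | succ d ih =>
    intro a b hab
    have hlt : a.val + 1 < n := by have := b.isLt; omega
    set c : Fin n := ⟨a.val + 1, hlt⟩ with hc
    have hadj : (pathGraph n).Adj a c := pathGraph_adj.mpr (Or.inl rfl)
    obtain ⟨w, hw⟩ := ih c b (by simp [hc]; omega)
    exact ⟨Walk.cons hadj w, by simp [hw]⟩

lemma pathGraph_walk_lb {n : ℕ} {a b : Fin n} (w : (pathGraph n).Walk a b) :
    b.val ≤ a.val + w.length ∧ a.val ≤ b.val + w.length := by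
  induction w with
  | nil => simp
  | @cons a c b h q ih =>
    rcases pathGraph_adj.mp h with hadj | hadj <;>
      · rw [Walk.length_cons]
        omega

lemma pathGraph_dist {n : ℕ} (a b : Fin n) (hab : a.val ≤ b.val) :
    (pathGraph n).dist a b = b.val - a.val := by
  obtain ⟨w, hw⟩ := pathGraph_exists_walk (b.val - a.val) a b (by omega)
  apply le_antisymm
  · calc (pathGraph n).dist a b ≤ w.length := SimpleGraph.dist_le w
    _ = b.val - a.val := hw
  · have hr : (pathGraph n).Reachable a b := ⟨w⟩
    obtain ⟨w', hw'⟩ := hr.exists_walk_length_eq_dist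
    have := (pathGraph_walk_lb w').1
    omega

lemma pathGraph_dist_le {n : ℕ} (a b : Fin n) (hn : 1 ≤ n) :
    (pathGraph n).dist a b ≤ n - 1 := by
  rcases le_total a.val b.val with hab | hab
  · rw [pathGraph_dist a b hab]
    have := b.isLt; omega
  · rw [SimpleGraph.dist_comm, pathGraph_dist b a hab]
    have := a.isLt; omega

lemma pathGraph_edist {n : ℕ} (a b : Fin n) :
    (pathGraph n).edist a b = ((pathGraph n).dist a b : ℕ∞) := by
  have hr : (pathGraph n).Reachable a b := by
    rcases le_total a.val b.val with hab | hab
    · obtain ⟨w, _⟩ := pathGraph_exists_walk (b.val - a.val) a b (by omega)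
      exact ⟨w⟩
    · obtain ⟨w, _⟩ := pathGraph_exists_walk (a.val - b.val) b a (by omega)
      exact ⟨w.reverse⟩
  have : (pathGraph n).edist a b ≠ ⊤ := SimpleGraph.edist_ne_top_iff_reachable.mpr hr
  rw [SimpleGraph.dist, ENat.coe_toNat this]

lemma pathGraph_diam {n : ℕ} (hn : 1 ≤ n) : (pathGraph n).diam = n - 1 := by
  have h0 : 0 < n := hn
  set v0 : Fin n := ⟨0, h0⟩
  set v1 : Fin n := ⟨n-1, by omega⟩
  have hd : (pathGraph n).dist v0 v1 = n - 1 := by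
    rw [pathGraph_dist v0 v1 (by simp [v0, v1])]
    simp [v0, v1]
  have hediam : (pathGraph n).ediam = ((n - 1 : ℕ) : ℕ∞) := by
    apply le_antisymm
    · apply SimpleGraph.ediam_le_of_edist_le
      intro a b
      rw [pathGraph_edist]
      exact_mod_cast Nat.cast_le.mpr (pathGraph_dist_le a b hn)
    · have e1 : ((n - 1 : ℕ) : ℕ∞) = (pathGraph n).edist v0 v1 := by
        rw [pathGraph_edist, hd]
      rw [e1]
      exact SimpleGraph.edist_le_ediam
  rw [SimpleGraph.diam, hediam]
  exact ENat.toNat_coe _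

lemma square_extract {α : Type*} (f : ℕ → α) (s m : ℕ) (l : List α) (hm : l.length = m)
    (h : (List.range' s (2*m)).map f = l ++ l) : ∀ j < m, f (s+j) = f (s+m+j) := by
  intro j hj
  have key : ∀ (i : ℕ), i < 2*m → (l ++ l)[i]? = some (f (s+i)) := by
    intro i hi
    rw [← h]
    have hlen : i < ((List.range' s (2*m)).map f).length := by simp [List.length_range']; omega
    rw [List.getElem?_eq_getElem hlen, List.getElem_map, List.getElem_range']
    simp
  have k1 := key j (by omega)
  have k2 := key (m+j) (by omega)
  rw [List.getElem?_append_right (by omega), hm, show m + j - m = j by omega] at k2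
  rw [List.getElem?_append, if_pos (by omega)] at k1
  rw [k1, show s + (m+j) = s + m + j by ring] at k2
  exact Option.some.inj k2

theorem isThue_of_word {k n : ℕ} (f : ℕ → Fin k)
    (hsq : ∀ b m, 1 ≤ m → b + 2*m ≤ n → ¬ (∀ j < m, f (b+j) = f (b+m+j))) :
    IsThueColoring (pathGraph n) (fun v => f v.val) := by
  constructor
  · intro a b hab he
    rcases pathGraph_adj.mp hab with h | h
    · refine hsq a.val 1 le_rfl (by have := b.isLt; omega) ?_
      intro j hj
      interval_cases j
      simpa [show a.val + 1 + 0 = b.val by omega] using he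
    · refine hsq b.val 1 le_rfl (by have := a.isLt; omega) ?_
      intro j hj
      interval_cases j
      simpa [show b.val + 1 + 0 = a.val by omega] using he.symm
  · intro a b p hp l hl hsquare
    set m := l.length with hm
    have hm1 : 1 ≤ m := by
      rcases l with _ | ⟨x, l'⟩
      · exact absurd rfl hl
      · simp [hm]
    have hlen : p.length + 1 = 2*m := by
      have h1 := congrArg List.length hsquare
      simp only [List.length_map, Walk.length_support, List.length_append] at h1
      omega
    have hmap : p.support.map (fun v => f v.val) = (p.support.map Fin.val).map f := by
      rw [List.map_map]; rfl
    rcases path_support p hp with ⟨hs, hb⟩ | ⟨hs, ha⟩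
    · have hsq' : (List.range' a.val (2*m)).map f = l ++ l := by
        rw [← hlen, ← hs, ← hmap, hsquare]
      refine hsq a.val m hm1 (by have := b.isLt; omega) ?_
      exact square_extract f a.val m l rfl hsq'
    · have hsq' : (List.range' b.val (2*m)).map f = (l.reverse) ++ (l.reverse) := by
        have : ((List.range' b.val (2*m)).map f).reverse = l ++ l := by
          rw [← List.map_reverse, ← hlen, ← hs, ← hmap, hsquare]
        rw [← List.reverse_reverse ((List.range' b.val (2*m)).map f), this, List.reverse_append]
      refine hsq b.val m hm1 (by have := a.isLt; omega) ?_
      exact square_extract f b.val m l.reverse (by simp [hm]) hsq'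


lemma u_adj (t : ℕ) : u t ≠ u (t+1) := by
  intro h
  refine u_squarefree t 1 le_rfl ?_
  intro k hk
  interval_cases k
  simpa using h

lemma fin3_aux : ∀ (y c x z : Fin 3), y ≠ c → x ≠ y → x ≠ c → z ≠ y → z ≠ c → x = z := by decide

lemma fin2_aux : ∀ (x y z : Fin 2), x ≠ y → z ≠ y → x = z := by decide

lemma u_window (s : ℕ) (c : Fin 3) : ∃ j, j ≤ 3 ∧ u (s+j) = c := by
  by_contra hno
  push_neg at hno
  have h0 : u s ≠ c := by simpa using hno 0 (by omega)
  have h1 := hno 1 (by omega)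
  have h2 := hno 2 (by omega)
  have h3 := hno 3 (by omega)
  have a0 : u s ≠ u (s+1) := u_adj s
  have a1 : u (s+1) ≠ u (s+2) := by
    have := u_adj (s+1); rwa [show s+1+1 = s+2 by ring] at this
  have a2 : u (s+2) ≠ u (s+3) := by
    have := u_adj (s+2); rwa [show s+2+1 = s+3 by ring] at this
  have e2 : u (s+2) = u s := fin3_aux (u (s+1)) c _ _ h1 (Ne.symm a1) h2 a0 h0
  have e3 : u (s+3) = u (s+1) := fin3_aux (u (s+2)) c _ _ h2 (Ne.symm a2) h3 a1 h1
  refine u_squarefree s 2 (by omega) ?_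
  intro k hk
  interval_cases k
  · simpa using e2.symm
  · rw [show s+2+1 = s+3 by omega]
    exact e3.symm

/-- The two-colour word used for `P₃`. -/
def f3 : ℕ → Fin 2 := fun j => if j = 1 then 1 else 0

lemma f3_thue : IsThueColoring (pathGraph 3) (fun v : Fin 3 => f3 v.val) := by
  refine isThue_of_word f3 ?_
  intro b m hm hle H
  have hm1 : m = 1 := by omega
  subst hm1
  have hb : b ≤ 1 := by omega
  have := H 0 (by omega)
  interval_cases b <;> simp [f3] at this

lemma thueNumber_pathGraph_three : thueNumber (pathGraph 3) = 2 := by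
  have h2 : 2 ∈ {k | ∃ φ : Fin 3 → Fin k, IsThueColoring (pathGraph 3) φ} :=
    ⟨fun v => f3 v.val, f3_thue⟩
  have hne : {k | ∃ φ : Fin 3 → Fin k, IsThueColoring (pathGraph 3) φ}.Nonempty := ⟨2, h2⟩
  have hmem := Nat.sInf_mem hne
  have hle : thueNumber (pathGraph 3) ≤ 2 := Nat.sInf_le h2
  unfold thueNumber at *
  set K := sInf {k | ∃ φ : Fin 3 → Fin k, IsThueColoring (pathGraph 3) φ} with hK
  rcases Nat.lt_or_ge K 2 with h | h
  · exfalso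
    have : K = 0 ∨ K = 1 := by omega
    rcases this with h0 | h1
    · rw [h0] at hmem
      obtain ⟨φ, _⟩ := hmem
      exact (φ ⟨0, by omega⟩).elim0
    · rw [h1] at hmem
      obtain ⟨φ, hφ⟩ := hmem
      have hadj : (pathGraph 3).Adj ⟨0, by omega⟩ ⟨1, by omega⟩ :=
        pathGraph_adj.mpr (Or.inl rfl)
      exact hφ.1 hadj (Subsingleton.elim _ _)
  · omega

lemma thueNumber_pathGraph_ge4 (n : ℕ) (hn : 4 ≤ n) : thueNumber (pathGraph n) = 3 := by
  have h3 : 3 ∈ {k | ∃ φ : Fin n → Fin k, IsThueColoring (pathGraph n) φ} :=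
    ⟨fun v => u v.val, isThue_of_word u (fun b m hm _ => u_squarefree b m hm)⟩
  have hne : {k | ∃ φ : Fin n → Fin k, IsThueColoring (pathGraph n) φ}.Nonempty := ⟨3, h3⟩
  have hmem := Nat.sInf_mem hne
  have hle : thueNumber (pathGraph n) ≤ 3 := Nat.sInf_le h3
  unfold thueNumber at *
  set K := sInf {k | ∃ φ : Fin n → Fin k, IsThueColoring (pathGraph n) φ} with hK
  rcases Nat.lt_or_ge K 3 with h | h
  · exfalso
    have : K = 0 ∨ K = 1 ∨ K = 2 := by omega
    rcases this with h0 | h1 | h2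
    · rw [h0] at hmem
      obtain ⟨φ, _⟩ := hmem
      exact (φ ⟨0, by omega⟩).elim0
    · rw [h1] at hmem
      obtain ⟨φ, hφ⟩ := hmem
      have hadj : (pathGraph n).Adj ⟨0, by omega⟩ ⟨1, by omega⟩ :=
        pathGraph_adj.mpr (Or.inl rfl)
      exact hφ.1 hadj (Subsingleton.elim _ _)
    · rw [h2] at hmem
      obtain ⟨φ, hφ⟩ := hmem
      set v0 : Fin n := ⟨0, by omega⟩
      set v1 : Fin n := ⟨1, by omega⟩
      set v2 : Fin n := ⟨2, by omega⟩
      set v3 : Fin n := ⟨3, by omega⟩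
      have a01 : (pathGraph n).Adj v0 v1 := pathGraph_adj.mpr (Or.inl rfl)
      have a12 : (pathGraph n).Adj v1 v2 := pathGraph_adj.mpr (Or.inl rfl)
      have a23 : (pathGraph n).Adj v2 v3 := pathGraph_adj.mpr (Or.inl rfl)
      set w : (pathGraph n).Walk v0 v3 :=
        Walk.cons a01 (Walk.cons a12 (Walk.cons a23 Walk.nil)) with hw
      have hwpath : w.IsPath := by
        rw [Walk.isPath_def, hw]
        simp only [Walk.support_cons, Walk.support_nil]
        simp [List.nodup_cons, Fin.ext_iff, v0, v1, v2, v3]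
      have e2 : φ v2 = φ v0 := fin2_aux _ _ _ (Ne.symm (hφ.1 a12)) (hφ.1 a01)
      have e3 : φ v3 = φ v1 := fin2_aux _ _ _ (Ne.symm (hφ.1 a23)) (hφ.1 a12)
      refine hφ.2 w hwpath [φ v0, φ v1] (by simp) ?_
      rw [hw]
      simp only [Walk.support_cons, Walk.support_nil, List.map_cons, List.map_nil]
      rw [e2, e3]
      rfl
  · omega


theorem main_aux (n K : ℕ) (hn : 3 ≤ n) (hTN : thueNumber (pathGraph n) = K)
    (φ : Fin n → Fin K) (hsurj : Function.Surjective φ)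
    (hthue : IsThueColoring (pathGraph n) φ)
    (hends : φ ⟨0, by omega⟩ = φ ⟨n-1, by omega⟩) :
    thueReach (pathGraph n) = (pathGraph n).diam ∧ (pathGraph n).diam = n - 1 ∧
    ∃ ψ : Fin n → Fin (thueNumber (pathGraph n)), Function.Surjective ψ ∧
      IsThueColoring (pathGraph n) ψ ∧ ψ ⟨0, by omega⟩ = ψ ⟨n-1, by omega⟩ := by
  have hdiam : (pathGraph n).diam = n - 1 := pathGraph_diam (by omega)
  have hd : (pathGraph n).dist ⟨0, by omega⟩ (⟨n-1, by omega⟩ : Fin n) = n - 1 := by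
    rw [pathGraph_dist _ _ (by simp)]
    simp
  have hmem : 0 < n - 1 ∧ ∃ ψ : Fin n → Fin (thueNumber (pathGraph n)),
      Function.Surjective ψ ∧ IsThueColoring (pathGraph n) ψ ∧
      ∃ x y : Fin n, x ≠ y ∧ ψ x = ψ y ∧ (pathGraph n).dist x y = n - 1 := by
    refine ⟨by omega, ?_⟩
    rw [hTN]
    refine ⟨φ, hsurj, hthue, ⟨0, by omega⟩, ⟨n-1, by omega⟩, ?_, hends, hd⟩
    simp only [ne_eq, Fin.mk.injEq]
    omega
  have hreach : thueReach (pathGraph n) = n - 1 := by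
    unfold thueReach
    apply le_antisymm
    · apply csSup_le ⟨n-1, hmem⟩
      rintro d ⟨hd0, ψ, hsψ, htψ, x, y, hxy, hcol, hdist⟩
      rw [← hdist]
      exact pathGraph_dist_le x y (by omega)
    · refine le_csSup ⟨n-1, ?_⟩ hmem
      rintro d ⟨hd0, ψ, hsψ, htψ, x, y, hxy, hcol, hdist⟩
      rw [← hdist]
      exact pathGraph_dist_le x y (by omega)
  refine ⟨by rw [hreach, hdiam], hdiam, ?_⟩
  rw [hTN]
  exact ⟨φ, hsurj, hthue, hends⟩

/-- for the path `P_n`, `n ≥ 3`, the Thue reach equals the diameter,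
`π_R(P_n) = diam(P_n) = n − 1`; in particular some Thue colouring with exactly
`π(P_n)` colours gives the two end vertices the same colour. -/
theorem thueReach_pathGraph (n : ℕ) (hn : 3 ≤ n) :
    thueReach (pathGraph n) = (pathGraph n).diam ∧
    (pathGraph n).diam = n - 1 ∧
    ∃ φ : Fin n → Fin (thueNumber (pathGraph n)), Function.Surjective φ ∧
      IsThueColoring (pathGraph n) φ ∧
      φ ⟨0, by omega⟩ = φ ⟨n - 1, by omega⟩ := by
  by_cases h3 : n = 3
  · subst h3
    refine main_aux 3 2 (by omega) thueNumber_pathGraph_three (fun v => f3 v.val) ?_ f3_thue rfl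
    intro c
    obtain ⟨cv, hc⟩ := c
    interval_cases cv
    · exact ⟨⟨0, by omega⟩, rfl⟩
    · exact ⟨⟨1, by omega⟩, rfl⟩
  · have hn4 : 4 ≤ n := by omega
    obtain ⟨i0, hi0⟩ := exists_u_eq (n-1) (by omega)
    refine main_aux n 3 (by omega) (thueNumber_pathGraph_ge4 n hn4)
      (fun v => u (i0 + v.val)) ?_ ?_ ?_
    · intro c
      obtain ⟨j, hj3, hjc⟩ := u_window i0 c
      exact ⟨⟨j, by omega⟩, hjc⟩
    · refine isThue_of_word (fun t => u (i0 + t)) ?_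
      intro b m hm _ H
      refine u_squarefree (i0+b) m hm ?_
      intro j hj
      have h' : u (i0 + (b+j)) = u (i0 + (b+m+j)) := H j hj
      rw [show i0 + (b+j) = i0 + b + j by ring, show i0 + (b+m+j) = i0 + b + m + j by ring] at h'
      exact h' 
    · show u (i0 + 0) = u (i0 + (n-1))
      rw [Nat.add_zero]
      exact hi0
end
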